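/- Packing densities compose: for bounded domains Ω, V, W of volume 1 in ℝ^d, the packing density satisfies ρ_{Ω,W} ≥ ρ_{Ω,V} · ρ_{V,W}. -/

import Mathlib

open MeasureTheory Pointwise

/-- A packing of the `n`-th propagation `Ω^{(n)} = ⊔_{l=1}^n n^{-1/d}Ω` of `Ω` into `V`
of density `ρ`, given by an isometric quasi-embedding: `n` isometries of `ℝ^d` sending the
closures of the scaled copies `n^{-1/d}Ω` into `ρ^{-1/d}V`, with pairwise disjoint images
of the interiors (injectivity on the interior of the domain). -/
def IsPackingMap (d n : ℕ) (ρ : ℝ) (Ω V : Set (EuclideanSpace ℝ (Fin d)))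
    (f : ℕ → EuclideanSpace ℝ (Fin d) → EuclideanSpace ℝ (Fin d)) : Prop :=
  (∀ l < n, Isometry (f l)) ∧
  (∀ l < n,
    f l '' closure (((n : ℝ) ^ (-(1 : ℝ) / d)) • Ω) ⊆ (ρ ^ (-(1 : ℝ) / d)) • V) ∧
  (∀ l < n, ∀ m < n, l ≠ m →
    Disjoint (f l '' interior (((n : ℝ) ^ (-(1 : ℝ) / d)) • Ω))
      (f m '' interior (((n : ℝ) ^ (-(1 : ℝ) / d)) • Ω)))

/-- The set of asymptotic densities `ρ_P` of asymptotic packings of `Ω` into `V`: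
triples of a strictly increasing sequence `n_i`, densities `ρ_i ∈ (0,1]` converging to
`ρ_P`, and packings of `Ω^{(n_i)}` into `V` of density `ρ_i`. -/
def AsympDensitySet (d : ℕ) (Ω V : Set (EuclideanSpace ℝ (Fin d))) : Set ℝ :=
  {ρP | ∃ (n : ℕ → ℕ) (ρ : ℕ → ℝ)
      (f : ℕ → ℕ → EuclideanSpace ℝ (Fin d) → EuclideanSpace ℝ (Fin d)),
    StrictMono n ∧ (∀ i, 0 < ρ i ∧ ρ i ≤ 1) ∧
    Filter.Tendsto ρ Filter.atTop (nhds ρP) ∧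
    ∀ i, IsPackingMap d (n i) (ρ i) Ω V (f i)}

/-- The packing density `ρ_{Ω,V}` of `Ω` into `V`. -/
noncomputable def packDensity (d : ℕ) (Ω V : Set (EuclideanSpace ℝ (Fin d))) : ℝ :=
  sSup (AsympDensitySet d Ω V)

theorem IsPackingMap.comp {d n m : ℕ} {ρ σ : ℝ} {Ω V W : Set (EuclideanSpace ℝ (Fin d))}
    {f g : ℕ → EuclideanSpace ℝ (Fin d) → EuclideanSpace ℝ (Fin d)}
    (hρ : 0 < ρ) (hσ : 0 < σ) (hΩo : IsOpen Ω) (hVo : IsOpen V)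
    (hf : IsPackingMap d n ρ Ω V f) (hg : IsPackingMap d m σ V W g) :
    IsPackingMap d (n * m) (ρ * σ) Ω W
      (fun k x => (ρ ^ (-(1 : ℝ) / d)) • g (k / n)
        (((ρ ^ (-(1 : ℝ) / d))⁻¹ * (m : ℝ) ^ (-(1 : ℝ) / d)) • f (k % n)
          (((m : ℝ) ^ (-(1 : ℝ) / d))⁻¹ • x))) := by
  obtain ⟨hf1, hf2, hf3⟩ := hf
  obtain ⟨hg1, hg2, hg3⟩ := hg
  set e : ℝ := -(1 : ℝ) / d with he
  set a : ℝ := (n : ℝ) ^ e with ha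
  set b : ℝ := (m : ℝ) ^ e with hb
  set r : ℝ := ρ ^ e with hr
  set s : ℝ := σ ^ e with hs
  have hr0 : 0 < r := Real.rpow_pos_of_pos hρ e
  have hs0 : 0 < s := Real.rpow_pos_of_pos hσ e
  have hR : (ρ * σ) ^ e = r * s := Real.mul_rpow hρ.le hσ.le
  -- the key image identity
  have hkey : ∀ (i j : ℕ) (S : Set (EuclideanSpace ℝ (Fin d))),
      (fun x => r • g i ((r⁻¹ * b) • f j (b⁻¹ • x))) '' S
        = r • (g i '' ((r⁻¹ * b) • (f j '' (b⁻¹ • S)))) := by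
    intro i j S
    rw [← Set.image_smul, ← Set.image_smul, ← Set.image_smul]
    simp only [Set.image_image]
  refine ⟨?_, ?_, ?_⟩
  · -- isometries
    intro l hl
    have hn0 : 0 < n := Nat.pos_of_ne_zero (fun h => by simp [h] at hl)
    have hm0 : 0 < m := Nat.pos_of_ne_zero (fun h => by simp [h] at hl)
    have hb0 : 0 < b := Real.rpow_pos_of_pos (by exact_mod_cast hm0) e
    have him : l / n < m := Nat.div_lt_of_lt_mul hl
    have hjn : l % n < n := Nat.mod_lt _ hn0
    refine Isometry.of_dist_eq fun x y => ?_
    rw [dist_smul₀, (hg1 _ him).dist_eq, dist_smul₀, (hf1 _ hjn).dist_eq, dist_smul₀,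
      Real.norm_eq_abs, Real.norm_eq_abs, Real.norm_eq_abs,
      abs_of_pos hr0, abs_of_pos (by positivity), abs_of_pos (by positivity)]
    field_simp
  · -- closure containment
    intro l hl
    have hn0 : 0 < n := Nat.pos_of_ne_zero (fun h => by simp [h] at hl)
    have hm0 : 0 < m := Nat.pos_of_ne_zero (fun h => by simp [h] at hl)
    have ha0 : 0 < a := Real.rpow_pos_of_pos (by exact_mod_cast hn0) e
    have hb0 : 0 < b := Real.rpow_pos_of_pos (by exact_mod_cast hm0) e
    have him : l / n < m := Nat.div_lt_of_lt_mul hl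
    have hjn : l % n < n := Nat.mod_lt _ hn0
    have hA : ((n * m : ℕ) : ℝ) ^ e = a * b := by
      push_cast
      rw [Real.mul_rpow (Nat.cast_nonneg n) (Nat.cast_nonneg m)]
    rintro y ⟨x, hx, rfl⟩
    -- x ∈ closure ((a*b) • Ω) = b • closure (a • Ω)
    have hx' : x ∈ b • closure (a • Ω) := by
      rw [← closure_smul₀, smul_smul, mul_comm b a, ← hA]
      exact hx
    obtain ⟨z, hz, rfl⟩ := hx'
    have hbz : b⁻¹ • b • z = z := inv_smul_smul₀ hb0.ne' z
    have hfz : f (l % n) z ∈ r • V := hf2 _ hjn ⟨z, hz, rfl⟩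
    obtain ⟨v, hv, hveq⟩ := hfz
    have h1 : (r⁻¹ * b) • f (l % n) z = b • v := by
      rw [← hveq, smul_smul]
      congr 1
      field_simp
    have hgv : g (l / n) (b • v) ∈ s • W :=
      hg2 _ him ⟨b • v, subset_closure ⟨v, hv, rfl⟩, rfl⟩
    obtain ⟨w, hw, hweq⟩ := hgv
    refine ⟨w, hw, ?_⟩
    simp only [hbz, h1, ← hweq, smul_smul, hR]
    exact congrArg (· • w) hR
  · -- disjointness
    intro l hl l' hl' hne
    have hn0 : 0 < n := Nat.pos_of_ne_zero (fun h => by simp [h] at hl)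
    have hm0 : 0 < m := Nat.pos_of_ne_zero (fun h => by simp [h] at hl)
    have ha0 : 0 < a := Real.rpow_pos_of_pos (by exact_mod_cast hn0) e
    have hb0 : 0 < b := Real.rpow_pos_of_pos (by exact_mod_cast hm0) e
    have him : l / n < m := Nat.div_lt_of_lt_mul hl
    have hjn : l % n < n := Nat.mod_lt _ hn0
    have him' : l' / n < m := Nat.div_lt_of_lt_mul hl'
    have hjn' : l' % n < n := Nat.mod_lt _ hn0
    have hA : ((n * m : ℕ) : ℝ) ^ e = a * b := by
      push_cast
      rw [Real.mul_rpow (Nat.cast_nonneg n) (Nat.cast_nonneg m)]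
    have hint : interior ((((n * m : ℕ) : ℝ) ^ e) • Ω) = b • (a • Ω) := by
      rw [hA, mul_comm a b, ← smul_smul]
      exact ((hΩo.smul₀ ha0.ne').smul₀ hb0.ne').interior_eq
    have hbsm : ∀ j : ℕ, b⁻¹ • (b • (a • Ω)) = a • Ω := fun _ => inv_smul_smul₀ hb0.ne' _
    have himg : ∀ k : ℕ,
        (fun x => r • g (k / n) ((r⁻¹ * b) • f (k % n) (b⁻¹ • x))) '' (b • (a • Ω))
          = r • (g (k / n) '' ((r⁻¹ * b) • (f (k % n) '' (a • Ω)))) := by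
      intro k
      rw [hkey, hbsm 0]
    rw [hint, himg l, himg l']
    -- inner sets are inside b • V
    have hrb : (r⁻¹ * b) • (r • V) = b • V := by
      rw [smul_smul]
      congr 1
      field_simp
    have hsub : ∀ j < n, (r⁻¹ * b) • (f j '' (a • Ω)) ⊆ b • V := by
      intro j hj
      have h1 : f j '' (a • Ω) ⊆ r • V :=
        (Set.image_mono subset_closure).trans (hf2 j hj)
      calc (r⁻¹ * b) • (f j '' (a • Ω)) ⊆ (r⁻¹ * b) • (r • V) := Set.smul_set_mono h1
        _ = b • V := hrb
    have hsmul_disj : ∀ (c : ℝ), c ≠ 0 → ∀ {S T : Set (EuclideanSpace ℝ (Fin d))},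
        Disjoint S T → Disjoint (c • S) (c • T) := by
      intro c hc S T hST
      rw [Set.disjoint_left] at hST ⊢
      rintro x ⟨u, hu, rfl⟩ ⟨u', hu', h⟩
      obtain rfl := smul_right_injective (EuclideanSpace ℝ (Fin d)) hc h
      exact hST hu hu'
    by_cases hii : l / n = l' / n
    · -- same V-copy, different Ω-copies
      have hjj : l % n ≠ l' % n := by
        intro h
        exact hne (by rw [← Nat.div_add_mod l n, ← Nat.div_add_mod l' n, hii, h])
      have D1 : Disjoint (f (l % n) '' (a • Ω)) (f (l' % n) '' (a • Ω)) := by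
        have := hf3 _ hjn _ hjn' hjj
        rwa [(hΩo.smul₀ ha0.ne').interior_eq] at this
      have D2 : Disjoint ((r⁻¹ * b) • (f (l % n) '' (a • Ω)))
          ((r⁻¹ * b) • (f (l' % n) '' (a • Ω))) :=
        hsmul_disj _ (by positivity) D1
      have D3 : Disjoint (g (l / n) '' ((r⁻¹ * b) • (f (l % n) '' (a • Ω))))
          (g (l' / n) '' ((r⁻¹ * b) • (f (l' % n) '' (a • Ω)))) := by
        rw [← hii]
        exact (Set.disjoint_image_iff (hg1 _ him).injective).mpr D2
      exact hsmul_disj _ hr0.ne' D3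
    · -- different V-copies
      have D1 : Disjoint (g (l / n) '' (b • V)) (g (l' / n) '' (b • V)) := by
        have := hg3 _ him _ him' hii
        rwa [(hVo.smul₀ hb0.ne').interior_eq] at this
      have D3 : Disjoint (g (l / n) '' ((r⁻¹ * b) • (f (l % n) '' (a • Ω))))
          (g (l' / n) '' ((r⁻¹ * b) • (f (l' % n) '' (a • Ω)))) :=
        D1.mono (Set.image_mono (hsub _ hjn)) (Set.image_mono (hsub _ hjn'))
      exact hsmul_disj _ hr0.ne' D3

theorem mul_mem_asympDensitySet {d : ℕ} {Ω V W : Set (EuclideanSpace ℝ (Fin d))}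
    (hΩo : IsOpen Ω) (hVo : IsOpen V) {x y : ℝ}
    (hx : x ∈ AsympDensitySet d Ω V) (hy : y ∈ AsympDensitySet d V W) :
    x * y ∈ AsympDensitySet d Ω W := by
  obtain ⟨n, ρ, f, hn, hρ, hρlim, hpf⟩ := hx
  obtain ⟨m, σ, g, hm, hσ, hσlim, hpg⟩ := hy
  refine ⟨fun i => n i * m i, fun i => ρ i * σ i,
    fun i k z => ((ρ i) ^ (-(1 : ℝ) / d)) • g i (k / n i)
      ((((ρ i) ^ (-(1 : ℝ) / d))⁻¹ * ((m i : ℕ) : ℝ) ^ (-(1 : ℝ) / d)) • f i (k % n i)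
        ((((m i : ℕ) : ℝ) ^ (-(1 : ℝ) / d))⁻¹ • z)), ?_, ?_, ?_, ?_⟩
  · refine strictMono_nat_of_lt_succ fun i => ?_
    have h1 : n i < n (i + 1) := hn (Nat.lt_succ_self i)
    have h2 : m i < m (i + 1) := hm (Nat.lt_succ_self i)
    calc n i * m i < (n i + 1) * (m i + 1) := by nlinarith [Nat.zero_le (n i), Nat.zero_le (m i)]
      _ ≤ n (i + 1) * m (i + 1) := Nat.mul_le_mul (by omega) (by omega)
  · intro i
    exact ⟨mul_pos (hρ i).1 (hσ i).1, mul_le_one₀ (hρ i).2 (hσ i).1.le (hσ i).2⟩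
  · exact hρlim.mul hσlim
  · intro i
    exact IsPackingMap.comp (hρ i).1 (hσ i).1 hΩo hVo (hpf i) (hpg i)

theorem asympDensitySet_subset_Icc {d : ℕ} {Ω V : Set (EuclideanSpace ℝ (Fin d))} :
    AsympDensitySet d Ω V ⊆ Set.Icc 0 1 := by
  rintro x ⟨n, ρ, f, hn, hρ, hlim, hp⟩
  constructor
  · exact ge_of_tendsto hlim (Filter.Eventually.of_forall fun i => (hρ i).1.le)
  · exact le_of_tendsto hlim (Filter.Eventually.of_forall fun i => (hρ i).2)

theorem packDensity_composition
    (d : ℕ) (hd : 2 ≤ d) (Ω V W : Set (EuclideanSpace ℝ (Fin d)))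
    (hΩ : IsOpen Ω ∧ IsConnected Ω ∧ Bornology.IsBounded Ω ∧ volume Ω = 1)
    (hV : IsOpen V ∧ IsConnected V ∧ Bornology.IsBounded V ∧ volume V = 1)
    (hW : IsOpen W ∧ IsConnected W ∧ Bornology.IsBounded W ∧ volume W = 1) :
    packDensity d Ω V * packDensity d V W ≤ packDensity d Ω W := by
  set A := AsympDensitySet d Ω V with hA
  set B := AsympDensitySet d V W with hB
  set C := AsympDensitySet d Ω W with hC
  have hAI : A ⊆ Set.Icc 0 1 := asympDensitySet_subset_Icc
  have hBI : B ⊆ Set.Icc 0 1 := asympDensitySet_subset_Icc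
  have hCI : C ⊆ Set.Icc 0 1 := asympDensitySet_subset_Icc
  have hmul : ∀ a ∈ A, ∀ b ∈ B, a * b ∈ C := fun a ha b hb =>
    mul_mem_asympDensitySet hΩ.1 hV.1 ha hb
  have hC0 : (0 : ℝ) ≤ sSup C := Real.sSup_nonneg (fun x hx => (hCI hx).1)
  have hCbdd : BddAbove C := ⟨1, fun x hx => (hCI hx).2⟩
  show sSup A * sSup B ≤ sSup C
  rcases A.eq_empty_or_nonempty with hAe | hAne
  · rw [hAe, Real.sSup_empty, zero_mul]; exact hC0
  rcases B.eq_empty_or_nonempty with hBe | hBne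
  · rw [hBe, Real.sSup_empty, mul_zero]; exact hC0
  have h0B : (0 : ℝ) ≤ sSup B := Real.sSup_nonneg (fun x hx => (hBI hx).1)
  have key : ∀ a ∈ A, a * sSup B ≤ sSup C := by
    intro a ha
    rcases (hAI ha).1.eq_or_lt with h | h
    · rw [← h, zero_mul]; exact hC0
    · have hB' : sSup B ≤ sSup C / a := by
        refine csSup_le hBne fun b hb => ?_
        rw [le_div_iff₀ h]
        exact le_csSup hCbdd (mul_comm a b ▸ hmul a ha b hb)
      calc a * sSup B ≤ a * (sSup C / a) := mul_le_mul_of_nonneg_left hB' h.le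
        _ = sSup C := by field_simp
  rcases h0B.eq_or_lt with h | h
  · rw [← h, mul_zero]; exact hC0
  · have hA' : sSup A ≤ sSup C / sSup B := by
      refine csSup_le hAne fun a ha => ?_
      rw [le_div_iff₀ h]
      exact key a ha
    calc sSup A * sSup B ≤ (sSup C / sSup B) * sSup B :=
        mul_le_mul_of_nonneg_right hA' h0B
      _ = sSup C := by field_simp
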